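/- For every s, t > 0, Γ(1+s)^t/Γ(1+st) = exp(∫_{-∞}^0 (e^{sx} - 1 - sx)·(t/(e^{|x|}-1) - 1/(e^{|x|/t}-1)) dx/|x|), with the integral converging absolutely. -/

import Mathlib

open MeasureTheory Set Filter Real Topology ENNReal NNReal intervalIntegral




lemma int_exp_neg_interval (c : ℝ) {u : ℝ} (hu : u ≠ 0) :
    ∫ v in (0:ℝ)..c, Real.exp (-(v*u)) = (1 - Real.exp (-(c*u))) / u := by
  have h1 : ∫ v in (0:ℝ)..c, Real.exp (-(v*u)) = u⁻¹ • ∫ x in (0:ℝ)..(c*u), Real.exp (-x) := by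
    simpa using intervalIntegral.integral_comp_mul_right (fun x => Real.exp (-x)) hu (a := 0) (b := c)
  rw [h1]
  have h2 : ∫ x in (0:ℝ)..(c*u), Real.exp (-x) = 1 - Real.exp (-(c*u)) := by
    have := intervalIntegral.integral_comp_neg (a := (0:ℝ)) (b := c*u) (fun x => Real.exp x)
    rw [this, integral_exp]
    simp
  rw [h2, smul_eq_mul]; ring

-- inner v-integral
lemma inner_v (s a : ℝ) (hs : 0 ≤ s) {u : ℝ} (hu : 0 < u) :
    ∫ v in Ioc (0:ℝ) s, (1 - Real.exp (-(v*u))) * Real.exp (-(a*u)) =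
      (Real.exp (-(s*u)) - 1 + s*u) * Real.exp (-(a*u)) / u := by
  rw [← intervalIntegral.integral_of_le hs]
  rw [intervalIntegral.integral_mul_const]
  have hsub : ∫ v in (0:ℝ)..s, (1 - Real.exp (-(v*u))) =
      s - (1 - Real.exp (-(s*u))) / u := by
    rw [intervalIntegral.integral_sub intervalIntegrable_const]
    · rw [int_exp_neg_interval s hu.ne', intervalIntegral.integral_const]
      simp
    · apply Continuous.intervalIntegrable; continuity
  rw [hsub]; field_simp; ring

lemma int_exp_neg_mul {b : ℝ} (hb : 0 < b) :
    ∫ u in Ioi (0:ℝ), Real.exp (-(b*u)) = 1/b := by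
  have := integral_comp_mul_left_Ioi (fun x => Real.exp (-x)) 0 hb
  simp only [mul_zero, integral_exp_neg_Ioi, neg_zero, Real.exp_zero, smul_eq_mul] at this
  simpa [one_div] using this

lemma integrable_exp_neg_mul {b : ℝ} (hb : 0 < b) :
    IntegrableOn (fun u : ℝ => Real.exp (-(b*u))) (Ioi 0) := by
  simpa [neg_mul] using exp_neg_integrableOn_Ioi 0 hb

-- inner u-integral
lemma inner_u {a v : ℝ} (ha : 0 < a) (hv : 0 < v) :
    ∫ u in Ioi (0:ℝ), (1 - Real.exp (-(v*u))) * Real.exp (-(a*u)) =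
      1/a - 1/(a+v) := by
  have heq : ∀ u : ℝ, (1 - Real.exp (-(v*u))) * Real.exp (-(a*u)) =
      Real.exp (-(a*u)) - Real.exp (-((a+v)*u)) := by
    intro u
    rw [sub_mul, one_mul, ← Real.exp_add]
    ring_nf
  simp_rw [heq]
  rw [integral_sub (integrable_exp_neg_mul ha) (integrable_exp_neg_mul (by linarith)),
    int_exp_neg_mul ha, int_exp_neg_mul (by linarith : (0:ℝ) < a+v)]

-- outer v-integral
lemma outer_v {a s : ℝ} (ha : 0 < a) (hs : 0 < s) :
    ∫ v in Ioc (0:ℝ) s, (1/a - 1/(a+v)) = s/a - Real.log (1 + s/a) := by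
  rw [← intervalIntegral.integral_of_le hs.le]
  rw [intervalIntegral.integral_sub intervalIntegrable_const]
  · rw [intervalIntegral.integral_const]
    have h1 : ∫ v in (0:ℝ)..s, 1/(a+v) = Real.log ((a+s)/a) := by
      have := intervalIntegral.integral_comp_add_left (a := (0:ℝ)) (b := s) (fun x => 1/x) a
      rw [this, add_zero, integral_one_div]
      intro h
      rcases Set.mem_uIcc.mp h with ⟨h1, _⟩ | ⟨_, h2⟩ <;> linarith
    rw [h1]
    have : (a+s)/a = 1 + s/a := by field_simp
    rw [this]; simp [smul_eq_mul]; ring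
  · apply ContinuousOn.intervalIntegrable
    apply ContinuousOn.div continuousOn_const (by fun_prop)
    intro x hx
    rcases Set.mem_uIcc.mp hx with ⟨h1, _⟩ | ⟨_, h2⟩ <;> intro h <;> linarith


lemma h_nonneg {s : ℝ} (hs : 0 < s) {u : ℝ} (hu : 0 < u) :
    0 ≤ Real.exp (-(s*u)) - 1 + s*u := by
  have := Real.add_one_le_exp (-(s*u))
  linarith

lemma h_bound {s a : ℝ} (hs : 0 < s) {u : ℝ} (hu : 0 < u) :
    (Real.exp (-(s*u)) - 1 + s*u) * Real.exp (-(a*u)) / u ≤ s * Real.exp (-(a*u)) := by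
  rw [div_le_iff₀ hu]
  have h1 : Real.exp (-(s*u)) - 1 + s*u ≤ s*u := by
    have : Real.exp (-(s*u)) ≤ 1 := Real.exp_le_one_iff.mpr (by nlinarith)
    linarith
  have := Real.exp_pos (-(a*u))
  nlinarith

lemma integrable_h {s a : ℝ} (hs : 0 < s) (ha : 0 < a) :
    IntegrableOn (fun u : ℝ => (Real.exp (-(s*u)) - 1 + s*u) * Real.exp (-(a*u)) / u)
      (Ioi 0) := by
  apply Integrable.mono' ((integrable_exp_neg_mul ha).const_mul s)
  · apply Measurable.aestronglyMeasurable
    fun_prop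
  · filter_upwards [ae_restrict_mem measurableSet_Ioi] with u hu
    rw [Real.norm_of_nonneg]
    · exact h_bound hs hu
    · exact div_nonneg (mul_nonneg (h_nonneg hs hu) (Real.exp_pos _).le) (le_of_lt hu)

lemma core {s a : ℝ} (hs : 0 < s) (ha : 0 < a) :
    ∫ u in Ioi (0:ℝ), (Real.exp (-(s*u)) - 1 + s*u) * Real.exp (-(a*u)) / u
      = s/a - Real.log (1 + s/a) := by
  set μ := volume.restrict (Ioi (0:ℝ))
  set ν := volume.restrict (Ioc (0:ℝ) s)
  set F : ℝ × ℝ → ℝ := fun p => (1 - Real.exp (-(p.2*p.1))) * Real.exp (-(a*p.1)) with hF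
  have hFc : Continuous F := by fun_prop
  have hmeas : AEStronglyMeasurable F (μ.prod ν) := hFc.aestronglyMeasurable
  -- a.e. u, the norm-integral equals h u
  have hslice : ∀ u : ℝ, u ∈ Ioi (0:ℝ) →
      (∫ v, ‖F (u, v)‖ ∂ν) = (Real.exp (-(s*u)) - 1 + s*u) * Real.exp (-(a*u)) / u := by
    intro u hu
    have : (∫ v, ‖F (u, v)‖ ∂ν) = ∫ v in Ioc (0:ℝ) s, (1 - Real.exp (-(v*u))) * Real.exp (-(a*u)) := by
      apply setIntegral_congr_fun measurableSet_Ioc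
      intro v hv
      simp only [hF, Real.norm_of_nonneg]
      rw [Real.norm_of_nonneg]
      apply mul_nonneg _ (Real.exp_pos _).le
      have : Real.exp (-(v*u)) ≤ 1 := Real.exp_le_one_iff.mpr (by nlinarith [hv.1, hu.out])
      linarith
    rw [this, inner_v s a hs.le hu]
  have hint : Integrable F (μ.prod ν) := by
    rw [integrable_prod_iff hmeas]
    constructor
    · refine Eventually.of_forall (fun u => ?_)
      exact (hFc.comp (by fun_prop : Continuous fun v : ℝ => (u, v))).integrableOn_Ioc
    · apply Integrable.congr (integrable_h hs ha)
      filter_upwards [ae_restrict_mem measurableSet_Ioi] with u hu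
      exact (hslice u hu).symm
  have hswap := integral_integral_swap (f := fun u v => F (u, v)) hint
  have hL : (∫ u, (∫ v, F (u, v) ∂ν) ∂μ)
      = ∫ u in Ioi (0:ℝ), (Real.exp (-(s*u)) - 1 + s*u) * Real.exp (-(a*u)) / u := by
    apply setIntegral_congr_fun measurableSet_Ioi
    intro u hu
    exact inner_v s a hs.le hu
  have hR : (∫ v, (∫ u, F (u, v) ∂μ) ∂ν) = s/a - Real.log (1 + s/a) := by
    rw [← outer_v ha hs]
    apply setIntegral_congr_fun measurableSet_Ioc
    intro v hv
    exact inner_u ha hv.1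
  rw [← hL, hswap, hR]


lemma hasSum_exp_neg {u : ℝ} (hu : 0 < u) :
    HasSum (fun n : ℕ => Real.exp (-(((n:ℝ)+1)*u))) (1/(Real.exp u - 1)) := by
  have h0 : (0:ℝ) ≤ Real.exp (-u) := (Real.exp_pos _).le
  have h1 : Real.exp (-u) < 1 := Real.exp_lt_one_iff.mpr (by linarith)
  have hgeo := hasSum_geometric_of_lt_one h0 h1
  have := hgeo.mul_left (Real.exp (-u))
  have heq : ∀ n : ℕ, Real.exp (-u) * Real.exp (-u) ^ n = Real.exp (-(((n:ℝ)+1)*u)) := by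
    intro n
    rw [← Real.exp_nat_mul, ← Real.exp_add]
    ring_nf
  have hval : Real.exp (-u) * (1 - Real.exp (-u))⁻¹ = 1/(Real.exp u - 1) := by
    have he : Real.exp u - 1 ≠ 0 := by
      have : 1 < Real.exp u := by
        rw [← Real.exp_zero]; exact Real.exp_lt_exp.mpr hu
      linarith
    have hne : 1 - Real.exp (-u) ≠ 0 := by linarith
    rw [Real.exp_neg]
    have hep : Real.exp u ≠ 0 := (Real.exp_pos u).ne'
    field_simp
  simpa only [heq, hval] using this


lemma sub_log_le_sq {x : ℝ} (hx : 0 ≤ x) : x - Real.log (1+x) ≤ x^2 := by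
  have h1 : Real.log (1/(1+x)) ≤ 1/(1+x) - 1 :=
    Real.log_le_sub_one_of_pos (by positivity)
  rw [Real.log_div one_ne_zero (by positivity), Real.log_one] at h1
  have h2 : x/(1+x) ≤ Real.log (1+x) := by
    have : 1/(1+x) - 1 = -(x/(1+x)) := by field_simp; ring
    rw [this] at h1; linarith
  have h3 : x - x/(1+x) = x^2/(1+x) := by field_simp; ring
  have h4 : x^2/(1+x) ≤ x^2 := by
    apply div_le_self (by positivity); linarith
  linarith

lemma sub_log_nonneg {x : ℝ} (hx : 0 ≤ x) : 0 ≤ x - Real.log (1+x) := by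
  have := Real.add_one_le_exp x
  have h := Real.log_le_sub_one_of_pos (show (0:ℝ) < 1+x by linarith)
  linarith

-- pointwise sum
lemma hasSum_f {s t : ℝ} (hs : 0 < s) (ht : 0 < t) {u : ℝ} (hu : 0 < u) :
    HasSum (fun n : ℕ =>
        t * ((Real.exp (-(s*u)) - 1 + s*u) * Real.exp (-(((n:ℝ)+1)*u)) / u)
        - (Real.exp (-(s*u)) - 1 + s*u) * Real.exp (-((((n:ℝ)+1)/t)*u)) / u)
      ((Real.exp (-(s*u)) - 1 + s*u) * (t/(Real.exp u - 1) - 1/(Real.exp (u/t) - 1)) / u) := by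
  have h1 := (hasSum_exp_neg hu).mul_left ((Real.exp (-(s*u)) - 1 + s*u) * t / u)
  have h2 := (hasSum_exp_neg (show 0 < u/t by positivity)).mul_left
      ((Real.exp (-(s*u)) - 1 + s*u) / u)
  have h3 := h1.sub h2
  have hfun : (fun n : ℕ =>
        (Real.exp (-(s*u)) - 1 + s*u) * t / u * Real.exp (-(((n:ℝ)+1)*u))
        - (Real.exp (-(s*u)) - 1 + s*u) / u * Real.exp (-(((n:ℝ)+1)*(u/t))))
      = (fun n : ℕ =>
        t * ((Real.exp (-(s*u)) - 1 + s*u) * Real.exp (-(((n:ℝ)+1)*u)) / u)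
        - (Real.exp (-(s*u)) - 1 + s*u) * Real.exp (-((((n:ℝ)+1)/t)*u)) / u) := by
    funext n
    have he : ((n:ℝ)+1)*(u/t) = (((n:ℝ)+1)/t)*u := by field_simp
    rw [he]; ring
  have hval : (Real.exp (-(s*u)) - 1 + s*u) * t / u * (1/(Real.exp u - 1))
      - (Real.exp (-(s*u)) - 1 + s*u) / u * (1/(Real.exp (u/t) - 1))
      = (Real.exp (-(s*u)) - 1 + s*u) * (t/(Real.exp u - 1) - 1/(Real.exp (u/t) - 1)) / u := by
    ring
  rw [hfun, hval] at h3
  exact h3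


lemma step2 {s t : ℝ} (hs : 0 < s) (ht : 0 < t) :
    IntegrableOn (fun u : ℝ => (Real.exp (-(s*u)) - 1 + s*u) *
        (t/(Real.exp u - 1) - 1/(Real.exp (u/t) - 1)) / u) (Ioi 0) ∧
    ∫ u in Ioi (0:ℝ), (Real.exp (-(s*u)) - 1 + s*u) *
        (t/(Real.exp u - 1) - 1/(Real.exp (u/t) - 1)) / u
      = ∑' n : ℕ, (Real.log (1 + s*t/((n:ℝ)+1)) - t * Real.log (1 + s/((n:ℝ)+1))) := by
  set μ := volume.restrict (Ioi (0:ℝ)) with hμ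
  set f : ℕ → ℝ → ℝ := fun n u =>
      t * ((Real.exp (-(s*u)) - 1 + s*u) * Real.exp (-(((n:ℝ)+1)*u)) / u)
      - (Real.exp (-(s*u)) - 1 + s*u) * Real.exp (-((((n:ℝ)+1)/t)*u)) / u with hf
  set g : ℝ → ℝ := fun u => (Real.exp (-(s*u)) - 1 + s*u) *
      (t/(Real.exp u - 1) - 1/(Real.exp (u/t) - 1)) / u with hg
  have hn1 : ∀ n : ℕ, (0:ℝ) < (n:ℝ)+1 := fun n => by positivity
  have hn2 : ∀ n : ℕ, (0:ℝ) < ((n:ℝ)+1)/t := fun n => by positivity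
  -- integrability of each term
  have hfint : ∀ n : ℕ, Integrable (f n) μ := fun n =>
    ((integrable_h hs (hn1 n)).const_mul t).sub (integrable_h hs (hn2 n))
  have hfmeas : ∀ n : ℕ, AEStronglyMeasurable (f n) μ := fun n => (hfint n).1
  -- value of each term
  have hdiv : ∀ n : ℕ, s/(((n:ℝ)+1)/t) = s*t/((n:ℝ)+1) := by
    intro n; rw [div_div_eq_mul_div]
  have hfval : ∀ n : ℕ, ∫ u, f n u ∂μ
      = Real.log (1 + s*t/((n:ℝ)+1)) - t * Real.log (1 + s/((n:ℝ)+1)) := by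
    intro n
    rw [hf]
    rw [integral_sub ((integrable_h hs (hn1 n)).const_mul t) (integrable_h hs (hn2 n))]
    rw [MeasureTheory.integral_const_mul, core hs (hn1 n), core hs (hn2 n), hdiv n]
    ring
  -- the nonneg majorant b n and its integral bound
  set b : ℕ → ℝ → ℝ := fun n u =>
      t * ((Real.exp (-(s*u)) - 1 + s*u) * Real.exp (-(((n:ℝ)+1)*u)) / u)
      + (Real.exp (-(s*u)) - 1 + s*u) * Real.exp (-((((n:ℝ)+1)/t)*u)) / u with hb
  have hbint : ∀ n : ℕ, Integrable (b n) μ := fun n =>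
    ((integrable_h hs (hn1 n)).const_mul t).add (integrable_h hs (hn2 n))
  have hwnn : ∀ (a : ℝ) (u : ℝ), 0 < u →
      0 ≤ (Real.exp (-(s*u)) - 1 + s*u) * Real.exp (-(a*u)) / u := by
    intro a u hu
    exact div_nonneg (mul_nonneg (h_nonneg hs hu) (Real.exp_pos _).le) hu.le
  have hbnn : ∀ n : ℕ, ∀ u ∈ Ioi (0:ℝ), 0 ≤ b n u := by
    intro n u hu
    exact add_nonneg (mul_nonneg ht.le (hwnn _ u hu)) (hwnn _ u hu)
  have habs : ∀ n : ℕ, ∀ u ∈ Ioi (0:ℝ), ‖f n u‖ ≤ b n u := by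
    intro n u hu
    rw [hf, hb]
    refine (norm_sub_le _ _).trans ?_
    rw [Real.norm_of_nonneg (mul_nonneg ht.le (hwnn _ u hu)), Real.norm_of_nonneg (hwnn _ u hu)]
  have hbval : ∀ n : ℕ, ∫ u, b n u ∂μ ≤ t * (s/((n:ℝ)+1))^2 + (s*t/((n:ℝ)+1))^2 := by
    intro n
    rw [hb, integral_add ((integrable_h hs (hn1 n)).const_mul t) (integrable_h hs (hn2 n)),
      MeasureTheory.integral_const_mul, core hs (hn1 n), core hs (hn2 n), hdiv n]
    have h1 : s/((n:ℝ)+1) - Real.log (1 + s/((n:ℝ)+1)) ≤ (s/((n:ℝ)+1))^2 :=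
      sub_log_le_sq (by positivity)
    have h2 : s*t/((n:ℝ)+1) - Real.log (1 + s*t/((n:ℝ)+1)) ≤ (s*t/((n:ℝ)+1))^2 :=
      sub_log_le_sq (by positivity)
    nlinarith
  -- lintegral bound
  have hlint : ∀ n : ℕ, ∫⁻ u, ‖f n u‖₊ ∂μ
      ≤ ENNReal.ofReal (t * (s/((n:ℝ)+1))^2 + (s*t/((n:ℝ)+1))^2) := by
    intro n
    have step1 : ∫⁻ u, ‖f n u‖₊ ∂μ ≤ ∫⁻ u, ENNReal.ofReal (b n u) ∂μ := by
      apply lintegral_mono_ae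
      filter_upwards [ae_restrict_mem measurableSet_Ioi] with u hu
      rw [← enorm_eq_nnnorm, ← ofReal_norm]
      exact ENNReal.ofReal_le_ofReal (habs n u hu)
    have step2 : ∫⁻ u, ENNReal.ofReal (b n u) ∂μ = ENNReal.ofReal (∫ u, b n u ∂μ) := by
      rw [← ofReal_integral_eq_lintegral_ofReal (hbint n)]
      filter_upwards [ae_restrict_mem measurableSet_Ioi] with u hu
      exact hbnn n u hu
    exact step1.trans (step2 ▸ ENNReal.ofReal_le_ofReal (hbval n))
  -- summability of the bounds
  have hsumb : Summable (fun n : ℕ => t * (s/((n:ℝ)+1))^2 + (s*t/((n:ℝ)+1))^2) := by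
    have base : Summable (fun n : ℕ => (1:ℝ)/((n:ℝ)+1)^2) := by
      have h0 : Summable (fun n : ℕ => (1:ℝ)/(n:ℝ)^2) :=
        Real.summable_one_div_nat_pow.mpr one_lt_two
      have := (_root_.summable_nat_add_iff 1).mpr h0
      refine this.congr fun n => ?_
      push_cast; ring_nf
    have e1 : Summable (fun n : ℕ => (t*s^2) * ((1:ℝ)/((n:ℝ)+1)^2)) := base.mul_left _
    have e2 : Summable (fun n : ℕ => ((s*t)^2) * ((1:ℝ)/((n:ℝ)+1)^2)) := base.mul_left _
    refine (e1.add e2).congr fun n => ?_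
    field_simp
    try ring; ring
  have hbnd_nonneg : ∀ n : ℕ, 0 ≤ t * (s/((n:ℝ)+1))^2 + (s*t/((n:ℝ)+1))^2 := by
    intro n; positivity
  have hne : ∑' n : ℕ, ∫⁻ u, ‖f n u‖₊ ∂μ ≠ ⊤ := by
    refine ne_top_of_le_ne_top ?_ (ENNReal.tsum_le_tsum hlint)
    rw [← ENNReal.ofReal_tsum_of_nonneg hbnd_nonneg hsumb]
    exact ENNReal.ofReal_ne_top
  -- swap integral and tsum
  have hswap := integral_tsum hfmeas hne
  simp_rw [hfval] at hswap
  -- a.e. equality of g with the tsum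
  have haeeq : ∀ᵐ u ∂μ, (∑' n : ℕ, f n u) = g u := by
    filter_upwards [ae_restrict_mem measurableSet_Ioi] with u hu
    exact (hasSum_f hs ht hu).tsum_eq
  constructor
  · -- integrability of g
    have hgmeas : AEStronglyMeasurable g μ := by
      apply Measurable.aestronglyMeasurable; rw [hg]; fun_prop
    refine ⟨hgmeas, ?_⟩
    show (∫⁻ u, ‖g u‖₊ ∂μ) < ⊤
    have hptsum : ∀ᵐ u ∂μ, (‖g u‖₊ : ℝ≥0∞) ≤ ∑' n : ℕ, (‖f n u‖₊ : ℝ≥0∞) := by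
      filter_upwards [haeeq, ae_restrict_mem measurableSet_Ioi] with u hu hu'
      have hw1 : Summable (fun n : ℕ => Real.exp (-(((n:ℝ)+1)*u))) :=
        (hasSum_exp_neg hu').summable
      have hw2 : Summable (fun n : ℕ => Real.exp (-(((n:ℝ)+1)*(u/t)))) :=
        (hasSum_exp_neg (div_pos hu' ht)).summable
      have hb_sum : Summable (fun n : ℕ => b n u) := by
        refine ((hw1.mul_left (t * ((Real.exp (-(s*u)) - 1 + s*u)/u))).add
          (hw2.mul_left ((Real.exp (-(s*u)) - 1 + s*u)/u))).congr fun n => ?_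
        rw [hb]
        have he : ((n:ℝ)+1)*(u/t) = (((n:ℝ)+1)/t)*u := by field_simp
        rw [he]; ring
      have hnorm_sum : Summable (fun n : ℕ => ‖f n u‖) :=
        Summable.of_nonneg_of_le (fun n => norm_nonneg _) (fun n => habs n u hu') hb_sum
      rw [← hu, ← enorm_eq_nnnorm, ← ofReal_norm]
      calc ENNReal.ofReal ‖∑' n, f n u‖ ≤ ENNReal.ofReal (∑' n, ‖f n u‖) :=
            ENNReal.ofReal_le_ofReal (norm_tsum_le_tsum_norm hnorm_sum)
        _ ≤ ∑' n : ℕ, (‖f n u‖₊ : ℝ≥0∞) := by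
            rw [ENNReal.ofReal_tsum_of_nonneg (fun n => norm_nonneg _) hnorm_sum]
            exact le_of_eq (tsum_congr fun n => ofReal_norm _)
    calc ∫⁻ u, ‖g u‖₊ ∂μ ≤ ∫⁻ u, ∑' n : ℕ, (‖f n u‖₊ : ℝ≥0∞) ∂μ := lintegral_mono_ae hptsum
      _ = ∑' n : ℕ, ∫⁻ u, ‖f n u‖₊ ∂μ :=
          lintegral_tsum (fun n => (hfmeas n).enorm)
      _ < ⊤ := hne.lt_top
  · rw [← hswap]
    exact integral_congr_ae (haeeq.mono fun u h => h.symm)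


lemma log_sum_eq {z : ℝ} (hz : 0 < z) {N : ℕ} (hN : 1 ≤ N) :
    ∑ n ∈ Finset.range N, Real.log (1 + z/((n:ℝ)+1))
      = z * Real.log N - Real.log z - Real.log (Real.GammaSeq z N) := by
  have hNpos : (0:ℝ) < N := by exact_mod_cast hN
  have hterm : ∀ n ∈ Finset.range N, Real.log (1 + z/((n:ℝ)+1))
      = Real.log (z + ((n:ℝ)+1)) - Real.log ((n:ℝ)+1) := by
    intro n _
    have hn1 : (0:ℝ) < (n:ℝ)+1 := by positivity
    rw [show (1:ℝ) + z/((n:ℝ)+1) = (z + ((n:ℝ)+1))/((n:ℝ)+1) by field_simp; ring]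
    rw [Real.log_div (by positivity) hn1.ne']
  rw [Finset.sum_congr rfl hterm, Finset.sum_sub_distrib]
  have hA : ∑ n ∈ Finset.range N, Real.log (z + ((n:ℝ)+1))
      = (∑ j ∈ Finset.range (N+1), Real.log (z + (j:ℝ))) - Real.log z := by
    rw [Finset.sum_range_succ' (fun j => Real.log (z + (j:ℝ))) N]
    push_cast
    simp
  have hB : ∑ n ∈ Finset.range N, Real.log ((n:ℝ)+1) = Real.log (Nat.factorial N : ℝ) := by
    rw [← Real.log_prod (fun n _ => by positivity)]
    congr 1
    rw [← Finset.prod_range_add_one_eq_factorial N]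
    push_cast
    rfl
  have hC : Real.log (Real.GammaSeq z N)
      = z * Real.log N + Real.log (Nat.factorial N : ℝ) - ∑ j ∈ Finset.range (N+1), Real.log (z + (j:ℝ)) := by
    rw [Real.GammaSeq]
    have hfac : (0:ℝ) < (Nat.factorial N : ℝ) := by exact_mod_cast Nat.factorial_pos N
    have hprod : ∀ j ∈ Finset.range (N+1), z + (j:ℝ) ≠ 0 := by
      intro j _; positivity
    have hprodpos : (0:ℝ) < ∏ j ∈ Finset.range (N+1), (z + (j:ℝ)) :=
      Finset.prod_pos (fun j _ => by positivity)
    rw [Real.log_div (by positivity) hprodpos.ne', Real.log_mul (by positivity) hfac.ne',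
      Real.log_rpow hNpos, Real.log_prod hprod]
  rw [hA, hB, hC]
  ring

lemma base_summable : Summable (fun n : ℕ => (1:ℝ)/((n:ℝ)+1)^2) := by
  have h0 : Summable (fun n : ℕ => (1:ℝ)/(n:ℝ)^2) :=
    Real.summable_one_div_nat_pow.mpr one_lt_two
  have := (_root_.summable_nat_add_iff 1).mpr h0
  refine this.congr fun n => ?_
  push_cast; ring_nf

lemma sub_log_le_sq' {x : ℝ} (hx : 0 ≤ x) : x - Real.log (1+x) ≤ x^2 := by
  have h1 : Real.log (1/(1+x)) ≤ 1/(1+x) - 1 :=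
    Real.log_le_sub_one_of_pos (by positivity)
  rw [Real.log_div one_ne_zero (by positivity), Real.log_one] at h1
  have h2 : x/(1+x) ≤ Real.log (1+x) := by
    have : 1/(1+x) - 1 = -(x/(1+x)) := by field_simp; ring
    rw [this] at h1; linarith
  have h3 : x - x/(1+x) = x^2/(1+x) := by field_simp; ring
  have h4 : x^2/(1+x) ≤ x^2 := by
    apply div_le_self (by positivity); linarith
  linarith

lemma summable_aux {c : ℝ} (hc : 0 < c) :
    Summable (fun n : ℕ => c/((n:ℝ)+1) - Real.log (1 + c/((n:ℝ)+1))) := by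
  refine Summable.of_nonneg_of_le (fun n => ?_) (fun n => ?_) (base_summable.mul_left (c^2))
  · have h := Real.log_le_sub_one_of_pos (show (0:ℝ) < 1 + c/((n:ℝ)+1) by positivity)
    linarith
  · have h := sub_log_le_sq' (show (0:ℝ) ≤ c/((n:ℝ)+1) by positivity)
    calc c/((n:ℝ)+1) - Real.log (1 + c/((n:ℝ)+1)) ≤ (c/((n:ℝ)+1))^2 := h
      _ = c^2 * ((1:ℝ)/((n:ℝ)+1)^2) := by field_simp

lemma tsum_val {s t : ℝ} (hs : 0 < s) (ht : 0 < t) :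
    ∑' n : ℕ, (Real.log (1 + s*t/((n:ℝ)+1)) - t * Real.log (1 + s/((n:ℝ)+1)))
      = t * Real.log (Real.Gamma (1+s)) - Real.log (Real.Gamma (1+s*t)) := by
  have hst : 0 < s*t := mul_pos hs ht
  have hsum : Summable (fun n : ℕ =>
      Real.log (1 + s*t/((n:ℝ)+1)) - t * Real.log (1 + s/((n:ℝ)+1))) := by
    refine (((summable_aux hs).mul_left t).sub (summable_aux hst)).congr fun n => ?_
    ring
  have h1 := hsum.hasSum.tendsto_sum_nat
  set φ : ℕ → ℝ := fun N => t * Real.log (Real.GammaSeq s N) - Real.log (Real.GammaSeq (s*t) N)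
      + (t * Real.log s - Real.log (s*t)) with hφdef
  have heq : (fun N => ∑ n ∈ Finset.range N,
      (Real.log (1 + s*t/((n:ℝ)+1)) - t * Real.log (1 + s/((n:ℝ)+1)))) =ᶠ[atTop] φ := by
    filter_upwards [eventually_ge_atTop 1] with N hN
    rw [Finset.sum_sub_distrib, ← Finset.mul_sum, log_sum_eq hst hN, log_sum_eq hs hN, hφdef]
    ring
  have hgs : Tendsto (fun N => Real.log (Real.GammaSeq s N)) atTop
      (𝓝 (Real.log (Real.Gamma s))) :=
    ((Real.continuousAt_log (Real.Gamma_pos_of_pos hs).ne').tendsto).comp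
      (Real.GammaSeq_tendsto_Gamma s)
  have hgst : Tendsto (fun N => Real.log (Real.GammaSeq (s*t) N)) atTop
      (𝓝 (Real.log (Real.Gamma (s*t)))) :=
    ((Real.continuousAt_log (Real.Gamma_pos_of_pos hst).ne').tendsto).comp
      (Real.GammaSeq_tendsto_Gamma (s*t))
  have hφ : Tendsto φ atTop (𝓝 (t * Real.log (Real.Gamma s) - Real.log (Real.Gamma (s*t))
      + (t * Real.log s - Real.log (s*t)))) := by
    exact (((hgs.const_mul t).sub hgst).add_const _)
  have h2 := hφ.congr' heq.symm
  have := tendsto_nhds_unique h1 h2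
  rw [this]
  rw [show (1:ℝ) + s = s + 1 by ring, show (1:ℝ) + s*t = s*t + 1 by ring,
    Real.Gamma_add_one hs.ne', Real.Gamma_add_one hst.ne',
    Real.log_mul hs.ne' (Real.Gamma_pos_of_pos hs).ne',
    Real.log_mul hst.ne' (Real.Gamma_pos_of_pos hst).ne']
  ring


theorem gamma_power_ratio_formula (s t : ℝ) (hs : 0 < s) (ht : 0 < t) :
    IntegrableOn
      (fun x : ℝ => (Real.exp (s * x) - 1 - s * x) *
        (t / (Real.exp |x| - 1) - 1 / (Real.exp (|x| / t) - 1)) / |x|)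
      (Set.Iio (0:ℝ)) ∧
    Real.Gamma (1 + s) ^ t / Real.Gamma (1 + s * t) =
      Real.exp (∫ x in Set.Iio (0:ℝ),
        (Real.exp (s * x) - 1 - s * x) *
          (t / (Real.exp |x| - 1) - 1 / (Real.exp (|x| / t) - 1)) / |x|) := by
  set F : ℝ → ℝ := fun x => (Real.exp (s * x) - 1 - s * x) *
      (t / (Real.exp |x| - 1) - 1 / (Real.exp (|x| / t) - 1)) / |x| with hF
  set g : ℝ → ℝ := fun u => (Real.exp (-(s*u)) - 1 + s*u) *
      (t/(Real.exp u - 1) - 1/(Real.exp (u/t) - 1)) / u with hg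
  obtain ⟨hgint, hgval⟩ := step2 hs ht
  have hFg : ∀ u ∈ Ioi (0:ℝ), (F ∘ Neg.neg) u = g u := by
    intro u hu
    simp only [Function.comp_apply, hF, hg, abs_neg, abs_of_pos (show (0:ℝ) < u from hu)]
    ring_nf
  have m : MeasurableEmbedding (fun x : ℝ => -x) := (Homeomorph.neg ℝ).measurableEmbedding
  -- integrability transfer
  have hFint : IntegrableOn F (Iio (0:ℝ)) := by
    rw [← Measure.map_neg_eq_self (volume : Measure ℝ), m.integrableOn_map_iff]
    have hpre : (fun x : ℝ => -x) ⁻¹' (Iio 0) = Ioi 0 := by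
      ext x; simp
    rw [hpre]
    exact hgint.congr_fun (fun u hu => (hFg u hu).symm) measurableSet_Ioi
  refine ⟨hFint, ?_⟩
  -- integral transfer
  have hIio : ∫ x in Iio (0:ℝ), F x = ∫ u in Ioi (0:ℝ), g u := by
    rw [← integral_Iic_eq_integral_Iio, ← neg_zero, ← integral_comp_neg_Ioi]
    rw [neg_zero]
    exact setIntegral_congr_fun measurableSet_Ioi hFg
  rw [hIio, hgval, tsum_val hs ht]
  have hA : 0 < Real.Gamma (1+s) := Real.Gamma_pos_of_pos (by linarith)
  have hB : 0 < Real.Gamma (1+s*t) := Real.Gamma_pos_of_pos (by positivity)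
  rw [Real.exp_sub, mul_comm t, Real.exp_mul, Real.exp_log hA, Real.exp_log hB]
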